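/- Let α, β, γ ∈ ℝ with α² - β² = 4, and suppose |exp(αx + βy + γ)| < 1 on a region U. Then w(x,y) = 2·arctanh(exp(αx + βy + γ)) satisfies the hyperbolic sinh-Gordon equation w_xx - w_yy = 2·sinh(2w) on U. -/

import Mathlib

open Real

private lemma first_deriv (a c : ℝ) (t : ℝ) (ht : Real.exp (a * t + c) < 1) :
    HasDerivAt (fun s => Real.log ((1 + Real.exp (a * s + c)) / (1 - Real.exp (a * s + c))))
      (2 * a * Real.exp (a * t + c) / (1 - Real.exp (a * t + c) ^ 2)) t := by
  set E : ℝ → ℝ := fun s => Real.exp (a * s + c) with hEdef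
  have hEpos : ∀ s, 0 < E s := fun s => Real.exp_pos _
  have hlin : HasDerivAt (fun s => a * s + c) a t := by
    simpa using ((hasDerivAt_id t).const_mul a).add_const c
  have hE : HasDerivAt E (a * E t) t := by
    simpa [mul_comm, Function.comp_def, hEdef] using (Real.hasDerivAt_exp (a * t + c)).comp t hlin
  have h1p : (0:ℝ) < 1 + E t := by positivity
  have h1m : (0:ℝ) < 1 - E t := by simpa [hEdef] using ht
  have hlog1 : HasDerivAt (fun s => Real.log (1 + E s)) (a * E t / (1 + E t)) t :=
    by simpa using HasDerivAt.log ((hasDerivAt_const t (1:ℝ)).add hE) (ne_of_gt h1p)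
  have hlog2 : HasDerivAt (fun s => Real.log (1 - E s)) (-(a * E t) / (1 - E t)) t :=
    by simpa using HasDerivAt.log ((hasDerivAt_const t (1:ℝ)).sub hE) (ne_of_gt h1m)
  have hsub : HasDerivAt (fun s => Real.log (1 + E s) - Real.log (1 - E s))
      (a * E t / (1 + E t) - -(a * E t) / (1 - E t)) t := hlog1.sub hlog2
  have heq : (fun s => Real.log ((1 + E s) / (1 - E s)))
      =ᶠ[nhds t] (fun s => Real.log (1 + E s) - Real.log (1 - E s)) := by
    have hopen : IsOpen {s : ℝ | E s < 1} := by
      have : Continuous E := by fun_prop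
      exact isOpen_lt this continuous_const
    filter_upwards [hopen.mem_nhds (by simpa [hEdef] using ht)] with s hs
    have : (0:ℝ) < 1 - E s := by linarith
    rw [Real.log_div (by positivity) (ne_of_gt this)]
  have := hsub.congr_of_eventuallyEq heq
  refine this.congr_deriv ?_
  have hden : (1:ℝ) - E t ^ 2 ≠ 0 := by nlinarith [hEpos t]
  show _ = 2 * a * E t / (1 - E t ^ 2)
  field_simp [ne_of_gt h1p, ne_of_gt h1m, hden]
  ring
  
private lemma second_deriv (a c : ℝ) (x : ℝ) (hx : Real.exp (a * x + c) < 1) :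
    deriv (deriv (fun s => Real.log ((1 + Real.exp (a * s + c)) / (1 - Real.exp (a * s + c))))) x
      = 2 * a ^ 2 * Real.exp (a * x + c) * (1 + Real.exp (a * x + c) ^ 2)
        / (1 - Real.exp (a * x + c) ^ 2) ^ 2 := by
  set E : ℝ → ℝ := fun s => Real.exp (a * s + c) with hEdef
  have hEpos : ∀ s, 0 < E s := fun s => Real.exp_pos _
  have hopen : IsOpen {s : ℝ | E s < 1} := by
    have : Continuous E := by fun_prop
    exact isOpen_lt this continuous_const
  have hnhds : {s : ℝ | E s < 1} ∈ nhds x := hopen.mem_nhds (by simpa [hEdef] using hx)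
  have heq : deriv (fun s => Real.log ((1 + E s) / (1 - E s)))
      =ᶠ[nhds x] (fun s => 2 * a * E s / (1 - E s ^ 2)) := by
    filter_upwards [hnhds] with s hs
    exact (first_deriv a c s hs).deriv
  rw [heq.deriv_eq]
  have hlin : HasDerivAt (fun s => a * s + c) a x := by
    simpa using ((hasDerivAt_id x).const_mul a).add_const c
  have hE : HasDerivAt E (a * E x) x := by
    simpa [mul_comm, Function.comp_def, hEdef] using (Real.hasDerivAt_exp (a * x + c)).comp x hlin
  have h1m : (0:ℝ) < 1 - E x := by simpa [hEdef] using hx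
  have hden : (1 - E x ^ 2) ≠ 0 := by nlinarith [hEpos x]
  have hnum : HasDerivAt (fun s => 2 * a * E s) (2 * a * (a * E x)) x := hE.const_mul _
  have hdenD : HasDerivAt (fun s => 1 - E s ^ 2) (-(2 * E x * (a * E x))) x := by
    have := (hE.pow 2)
    have h2 := (hasDerivAt_const x (1:ℝ)).fun_sub (by simpa [mul_comm, mul_assoc] using hE.fun_pow 2)
    simp only [zero_sub] at h2
    exact h2.congr_deriv (by ring)
  have hdiv := hnum.fun_div hdenD hden
  rw [hdiv.deriv]
  simp only [hEdef] at hden ⊢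
  field_simp
  ring

theorem stmt_13 (α β γ : ℝ) (h : α ^ 2 - β ^ 2 = 4)
    (U : Set (ℝ × ℝ)) (hU : IsOpen U)
    (hlt : ∀ p ∈ U, |Real.exp (α * p.1 + β * p.2 + γ)| < 1) :
    let w : ℝ → ℝ → ℝ := fun x y =>
      Real.log ((1 + Real.exp (α * x + β * y + γ)) / (1 - Real.exp (α * x + β * y + γ)))
    ∀ x y : ℝ, (x, y) ∈ U →
      deriv (deriv (fun x' => w x' y)) x - deriv (deriv (fun y' => w x y')) y
        = 2 * Real.sinh (2 * w x y) := by
  intro w x y hxy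
  have hE1 : Real.exp (α * x + β * y + γ) < 1 := by
    have := hlt (x, y) hxy
    rwa [abs_of_pos (Real.exp_pos _)] at this
  set E := Real.exp (α * x + β * y + γ) with hEdef
  have hEpos : 0 < E := Real.exp_pos _
  have hx2 : deriv (deriv (fun x' => w x' y)) x
      = 2 * α ^ 2 * E * (1 + E ^ 2) / (1 - E ^ 2) ^ 2 := by
    have hfun : (fun x' => w x' y)
        = (fun x' => Real.log ((1 + Real.exp (α * x' + (β * y + γ))) / (1 - Real.exp (α * x' + (β * y + γ))))) := by
      funext x'; simp only [w]; ring_nf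
    rw [hfun, second_deriv α (β * y + γ) x (by rwa [← add_assoc])]
    rw [hEdef]; ring_nf
  have hy2 : deriv (deriv (fun y' => w x y')) y
      = 2 * β ^ 2 * E * (1 + E ^ 2) / (1 - E ^ 2) ^ 2 := by
    have hfun : (fun y' => w x y')
        = (fun y' => Real.log ((1 + Real.exp (β * y' + (α * x + γ))) / (1 - Real.exp (β * y' + (α * x + γ))))) := by
      funext y'; simp only [w]; ring_nf
    rw [hfun, second_deriv β (α * x + γ) y (by rw [show β * y + (α * x + γ) = α * x + β * y + γ by ring]; exact hE1)]
    rw [show β * y + (α * x + γ) = α * x + β * y + γ by ring, ← hEdef]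
  rw [hx2, hy2]
  have h1m : (0:ℝ) < 1 - E := by linarith
  have h1p : (0:ℝ) < 1 + E := by linarith
  have hT : (0:ℝ) < (1 + E) / (1 - E) := by positivity
  have hw : w x y = Real.log ((1 + E) / (1 - E)) := rfl
  have hexp2w : Real.exp (2 * w x y) = ((1 + E) / (1 - E)) ^ 2 := by
    rw [hw, mul_comm, Real.exp_mul, Real.exp_log hT, Real.rpow_two]
  have hexpneg : Real.exp (-(2 * w x y)) = ((1 - E) / (1 + E)) ^ 2 := by
    rw [Real.exp_neg, hexp2w, ← inv_pow, inv_div]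
  rw [Real.sinh_eq, hexp2w, hexpneg]
  have hden : (1 - E ^ 2) ≠ 0 := by nlinarith
  field_simp
  linear_combination (2 * E * (1 + E ^ 2) * (1 - E) ^ 2 * (1 + E) ^ 2) * h
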